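/- Let N = m+n for positive integers m, n, let C = diag(𝟙ₘ, −𝟙ₙ), let J ∈ M_N(ℂ), and let μ₁,…,μ_r ∈ ℂ\{0} with ±μ₁,…,±μ_r pairwise distinct. Let B₁,…,B_r : ℝ → M_N(ℂ) be differentiable and Q⁽⁰⁾, Q⁽¹⁾ : ℝ → M_N(ℂ) continuous. Define g(x,λ) = 𝟙 + Σ_{j=1}^r (λ/μ_j)(B_j(x)/(λ−μ_j) + C B_j(x) C/(λ+μ_j)). Suppose that for every x ∈ ℝ and every λ ∈ ℂ outside {±μ_j}: i ∂ₓg(x,λ) + λ Q⁽¹⁾(x) g(x,λ) − λ g(x,λ) Q⁽⁰⁾(x) − λ² [J, g(x,λ)] = 0. Then for every x, with g_∞(x) := 𝟙 + Σ_{j=1}^r (B_j(x) + C B_j(x) C)/μ_j: (a) [J, g_∞(x)] = 0, and (b) Q⁽¹⁾(x) g_∞(x) − g_∞(x) Q⁽⁰⁾(x) = [J, Σ_{j=1}^r (B_j(x) − C B_j(x) C)]. -/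

import Mathlib

noncomputable section

open Matrix

/-- The Cartan involution matrix `C = diag(𝟙ₘ, -𝟙ₙ)`. -/
def Cmat (m n : ℕ) : Matrix (Fin m ⊕ Fin n) (Fin m ⊕ Fin n) ℂ :=
  Matrix.fromBlocks 1 0 0 (-1)

/-- Entrywise `x`-derivative of an `x`- and `λ`-dependent matrix. -/
def matDerivX {m n : ℕ} (M : ℝ → ℂ → Matrix (Fin m ⊕ Fin n) (Fin m ⊕ Fin n) ℂ)
    (x : ℝ) (lam : ℂ) : Matrix (Fin m ⊕ Fin n) (Fin m ⊕ Fin n) ℂ :=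
  Matrix.of fun p q => deriv (fun y => M y lam p q) x

open Filter Topology

def epsC (m n : ℕ) : Fin m ⊕ Fin n → ℂ := Sum.elim (fun _ => 1) (fun _ => -1)

lemma Cmat_eq_diagonal (m n : ℕ) : Cmat m n = Matrix.diagonal (epsC m n) := by
  ext i j
  cases i <;> cases j <;>
    simp [Cmat, epsC, Matrix.diagonal, Matrix.one_apply] <;> aesop

lemma Cmat_conj_apply {m n : ℕ} (M : Matrix (Fin m ⊕ Fin n) (Fin m ⊕ Fin n) ℂ)
    (p q : Fin m ⊕ Fin n) :
    (Cmat m n * M * Cmat m n) p q = epsC m n p * M p q * epsC m n q := by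
  rw [Cmat_eq_diagonal, Matrix.mul_diagonal, Matrix.diagonal_mul]

lemma tendsto_ofReal_inv : Tendsto (fun t : ℝ => ((t : ℂ))⁻¹) atTop (𝓝 0) := by
  have h := (Complex.continuous_ofReal.tendsto 0).comp tendsto_inv_atTop_zero
  rw [Complex.ofReal_zero] at h
  exact h.congr fun t => Complex.ofReal_inv t

lemma evNE (μ : ℂ) : ∀ᶠ t : ℝ in atTop, (t : ℂ) ≠ μ := by
  filter_upwards [eventually_gt_atTop ‖μ‖] with t ht h
  have h2 : ‖((t : ℂ))‖ = |t| := by simp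
  rw [h] at h2
  have h3 : (0:ℝ) ≤ ‖μ‖ := norm_nonneg μ
  rw [abs_of_pos (lt_of_le_of_lt h3 ht)] at h2
  linarith

lemma evNZ : ∀ᶠ t : ℝ in atTop, (t : ℂ) ≠ 0 := by
  filter_upwards [eventually_ge_atTop 1] with t ht
  exact Complex.ofReal_ne_zero.2 (by linarith)

lemma tendsto_ratio (μ : ℂ) :
    Tendsto (fun t : ℝ => (t : ℂ) * ((t : ℂ) - μ)⁻¹) atTop (𝓝 1) := by
  have h0 : Tendsto (fun t : ℝ => 1 - μ * ((t : ℂ))⁻¹) atTop (𝓝 1) := by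
    simpa using tendsto_const_nhds.sub (tendsto_ofReal_inv.const_mul μ)
  have h1 := h0.inv₀ one_ne_zero
  rw [inv_one] at h1
  refine Tendsto.congr' ?_ h1
  filter_upwards [evNE μ, evNZ] with t hμ h0'
  have hsub : (t : ℂ) - μ ≠ 0 := sub_ne_zero.2 hμ
  have e : 1 - μ * (t : ℂ)⁻¹ = ((t : ℂ) - μ) * (t : ℂ)⁻¹ := by
    field_simp
  rw [e, _root_.mul_inv_rev, inv_inv]

lemma tendsto_tratio (μ : ℂ) :
    Tendsto (fun t : ℝ => (t : ℂ) * ((t : ℂ) * ((t : ℂ) - μ)⁻¹ - 1)) atTop (𝓝 μ) := by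
  have h := (tendsto_ratio μ).const_mul μ
  rw [mul_one] at h
  refine Tendsto.congr' ?_ h
  filter_upwards [evNE μ] with t hμ
  have hsub : (t : ℂ) - μ ≠ 0 := sub_ne_zero.2 hμ
  field_simp
  ring

lemma add_sub_add_left' (a b c : ℂ) : a + b - (a + c) = b - c := by ring

lemma deriv_const_add_sum {r : ℕ} (c0 : ℂ) (K : Fin r → ℂ) (b : Fin r → ℝ → ℂ)
    (hb : ∀ j, Differentiable ℝ (b j)) (x : ℝ) :
    deriv (fun y => c0 + ∑ j, K j * b j y) x = ∑ j, K j * deriv (b j) x := by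
  have h : HasDerivAt (fun y => c0 + ∑ j, K j * b j y) (∑ j, K j * deriv (b j) x) x :=
    HasDerivAt.const_add c0 (HasDerivAt.fun_sum fun j _ => ((hb j x).hasDerivAt.const_mul (K j)))
  exact h.deriv

/-- Large-`λ` expansion of the dressing equation: if the dressing factor
`g(x,λ) = 𝟙 + Σⱼ (λ/μⱼ)(Bⱼ(x)/(λ-μⱼ) + CBⱼ(x)C/(λ+μⱼ))` satisfies the dressing
equation away from the poles, then with `g_∞ = 𝟙 + Σⱼ (Bⱼ + CBⱼC)/μⱼ` one has
`[J, g_∞] = 0` and `Q⁽¹⁾g_∞ - g_∞Q⁽⁰⁾ = [J, Σⱼ (Bⱼ - CBⱼC)]`. -/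
theorem dressed_potential_reconstruction {m n r : ℕ} (hm : 0 < m) (hn : 0 < n) (hr : 0 < r)
    (J : Matrix (Fin m ⊕ Fin n) (Fin m ⊕ Fin n) ℂ)
    (μ : Fin r → ℂ) (hμ0 : ∀ j, μ j ≠ 0)
    (hdist : Function.Injective fun js : Fin r × Fin 2 => ![μ js.1, -μ js.1] js.2)
    (B : Fin r → ℝ → Matrix (Fin m ⊕ Fin n) (Fin m ⊕ Fin n) ℂ)
    (hBd : ∀ j p q, Differentiable ℝ fun x => B j x p q)
    (Q0 Q1 : ℝ → Matrix (Fin m ⊕ Fin n) (Fin m ⊕ Fin n) ℂ)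
    (hQ0 : Continuous Q0) (hQ1 : Continuous Q1)
    (g : ℝ → ℂ → Matrix (Fin m ⊕ Fin n) (Fin m ⊕ Fin n) ℂ)
    (hg : ∀ x lam, g x lam = 1 + ∑ j, (lam / μ j) •
        ((lam - μ j)⁻¹ • B j x + (lam + μ j)⁻¹ • (Cmat m n * B j x * Cmat m n)))
    (heq : ∀ (x : ℝ) (lam : ℂ), (∀ j, lam ≠ μ j ∧ lam ≠ -μ j) →
      Complex.I • matDerivX g x lam + lam • (Q1 x * g x lam) - lam • (g x lam * Q0 x)
        - lam ^ 2 • (J * g x lam - g x lam * J) = 0) :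
    ∀ x : ℝ,
      (J * (1 + ∑ j, (μ j)⁻¹ • (B j x + Cmat m n * B j x * Cmat m n))
          - (1 + ∑ j, (μ j)⁻¹ • (B j x + Cmat m n * B j x * Cmat m n)) * J = 0) ∧
      (Q1 x * (1 + ∑ j, (μ j)⁻¹ • (B j x + Cmat m n * B j x * Cmat m n))
          - (1 + ∑ j, (μ j)⁻¹ • (B j x + Cmat m n * B j x * Cmat m n)) * Q0 x
        = J * (∑ j, (B j x - Cmat m n * B j x * Cmat m n))
          - (∑ j, (B j x - Cmat m n * B j x * Cmat m n)) * J) := by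
  intro x
  set gI := 1 + ∑ j, (μ j)⁻¹ • (B j x + Cmat m n * B j x * Cmat m n) with hgIdef
  set Tm := ∑ j, (B j x - Cmat m n * B j x * Cmat m n) with hTdef
  -- entrywise formula for g
  have hK : ∀ (lam : ℂ) (y : ℝ) (p q : Fin m ⊕ Fin n),
      g y lam p q = (1 : Matrix (Fin m ⊕ Fin n) (Fin m ⊕ Fin n) ℂ) p q
        + ∑ j, ((lam / μ j) * ((lam - μ j)⁻¹ + (lam + μ j)⁻¹ * (epsC m n p * epsC m n q)))
            * B j y p q := by
    intro lam y p q
    rw [hg]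
    simp only [Matrix.add_apply, Matrix.sum_apply, Matrix.smul_apply, smul_eq_mul,
      Cmat_conj_apply]
    refine congrArg (fun z => _ + z) (Finset.sum_congr rfl fun j _ => by ring)
  -- entrywise formula for the x-derivative
  have hD : ∀ (lam : ℂ) (p q : Fin m ⊕ Fin n),
      matDerivX g x lam p q
        = ∑ j, ((lam / μ j) * ((lam - μ j)⁻¹ + (lam + μ j)⁻¹ * (epsC m n p * epsC m n q)))
            * deriv (fun y => B j y p q) x := by
    intro lam p q
    have hfun : (fun y => g y lam p q)
        = fun y => (1 : Matrix (Fin m ⊕ Fin n) (Fin m ⊕ Fin n) ℂ) p q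
          + ∑ j, ((lam / μ j) * ((lam - μ j)⁻¹ + (lam + μ j)⁻¹ * (epsC m n p * epsC m n q)))
              * B j y p q := funext fun y => hK lam y p q
    show deriv (fun y => g y lam p q) x = _
    rw [hfun, deriv_const_add_sum _ _ _ (fun j => hBd j p q)]
  -- entrywise formulas for gI and Tm
  have hgI_apply : ∀ p q : Fin m ⊕ Fin n,
      gI p q = (1 : Matrix (Fin m ⊕ Fin n) (Fin m ⊕ Fin n) ℂ) p q
        + ∑ j, ((μ j)⁻¹ * (1 + epsC m n p * epsC m n q)) * B j x p q := by
    intro p q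
    rw [hgIdef]
    simp only [Matrix.add_apply, Matrix.sum_apply, Matrix.smul_apply, smul_eq_mul,
      Cmat_conj_apply]
    refine congrArg (fun z => _ + z) (Finset.sum_congr rfl fun j _ => by ring)
  have hT_apply : ∀ p q : Fin m ⊕ Fin n,
      Tm p q = ∑ j, (1 - epsC m n p * epsC m n q) * B j x p q := by
    intro p q
    rw [hTdef]
    simp only [Matrix.sum_apply, Matrix.sub_apply, Cmat_conj_apply]
    exact Finset.sum_congr rfl fun j _ => by ring
  -- scalar coefficient limits
  have hKlim : ∀ (p q : Fin m ⊕ Fin n) (j : Fin r),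
      Tendsto (fun t : ℝ => ((t : ℂ) / μ j)
          * (((t : ℂ) - μ j)⁻¹ + ((t : ℂ) + μ j)⁻¹ * (epsC m n p * epsC m n q)))
        atTop (𝓝 ((μ j)⁻¹ * (1 + epsC m n p * epsC m n q))) := by
    intro p q j
    have h3 := ((tendsto_ratio (μ j)).add
      ((tendsto_ratio (-μ j)).mul_const (epsC m n p * epsC m n q))).const_mul (μ j)⁻¹
    simp only [one_mul] at h3
    refine h3.congr fun t => ?_
    rw [sub_neg_eq_add]
    ring
  have hKdlim : ∀ (p q : Fin m ⊕ Fin n) (j : Fin r),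
      Tendsto (fun t : ℝ => (t : ℂ) * (((t : ℂ) / μ j)
          * (((t : ℂ) - μ j)⁻¹ + ((t : ℂ) + μ j)⁻¹ * (epsC m n p * epsC m n q))
          - (μ j)⁻¹ * (1 + epsC m n p * epsC m n q)))
        atTop (𝓝 (1 - epsC m n p * epsC m n q)) := by
    intro p q j
    have h3 := ((tendsto_tratio (μ j)).add
      ((tendsto_tratio (-μ j)).mul_const (epsC m n p * epsC m n q))).const_mul (μ j)⁻¹
    have hv : (μ j)⁻¹ * (μ j + (-μ j) * (epsC m n p * epsC m n q))
        = 1 - epsC m n p * epsC m n q := by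
      field_simp
      rw [div_eq_iff (hμ0 j)]
      ring
    rw [hv] at h3
    refine h3.congr fun t => ?_
    rw [sub_neg_eq_add]
    ring
  -- entrywise limits of g and t*(g - gI)
  have hglim : ∀ p q : Fin m ⊕ Fin n,
      Tendsto (fun t : ℝ => g x (t : ℂ) p q) atTop (𝓝 (gI p q)) := by
    intro p q
    rw [hgI_apply]
    have h := Tendsto.const_add ((1 : Matrix (Fin m ⊕ Fin n) (Fin m ⊕ Fin n) ℂ) p q)
      (tendsto_finset_sum Finset.univ fun j _ => (hKlim p q j).mul_const (B j x p q))
    exact h.congr fun t => (hK (t : ℂ) x p q).symm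
  have hdglim : ∀ p q : Fin m ⊕ Fin n,
      Tendsto (fun t : ℝ => (t : ℂ) * (g x (t : ℂ) p q - gI p q)) atTop (𝓝 (Tm p q)) := by
    intro p q
    rw [hT_apply]
    have h := tendsto_finset_sum Finset.univ fun j _ => (hKdlim p q j).mul_const (B j x p q)
    refine h.congr fun t => ?_
    rw [hK (t : ℂ) x p q, hgI_apply p q, add_sub_add_left', ← Finset.sum_sub_distrib,
      Finset.mul_sum]
    exact Finset.sum_congr rfl fun j _ => by ring
  have hDlim : ∀ p q : Fin m ⊕ Fin n,
      Tendsto (fun t : ℝ => matDerivX g x (t : ℂ) p q) atTop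
        (𝓝 (∑ j, ((μ j)⁻¹ * (1 + epsC m n p * epsC m n q)) * deriv (fun y => B j y p q) x)) := by
    intro p q
    have h := tendsto_finset_sum Finset.univ fun j _ =>
      (hKlim p q j).mul_const (deriv (fun y => B j y p q) x)
    exact h.congr fun t => (hD (t : ℂ) p q).symm
  -- eventual vanishing from the dressing equation
  have hev : ∀ᶠ t : ℝ in atTop, ∀ j, ((t : ℂ) ≠ μ j ∧ (t : ℂ) ≠ -μ j) := by
    rw [Filter.eventually_all]
    intro j
    exact (evNE (μ j)).and (evNE (-μ j))
  have hev0 : ∀ p q : Fin m ⊕ Fin n, ∀ᶠ t : ℝ in atTop,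
      Complex.I * matDerivX g x (t : ℂ) p q + (t : ℂ) * ((Q1 x * g x (t : ℂ)) p q)
        - (t : ℂ) * ((g x (t : ℂ) * Q0 x) p q)
        - (t : ℂ) ^ 2 * ((J * g x (t : ℂ)) p q - (g x (t : ℂ) * J) p q) = 0 := by
    intro p q
    filter_upwards [hev] with t ht
    have h2 := congrFun (congrFun (heq x (t : ℂ) ht) p) q
    simpa [Matrix.add_apply, Matrix.sub_apply, Matrix.smul_apply, smul_eq_mul] using h2
  have hinv2 : Tendsto (fun t : ℝ => (((t : ℂ)) ^ 2)⁻¹) atTop (𝓝 0) := by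
    have h := tendsto_ofReal_inv.mul tendsto_ofReal_inv
    rw [mul_zero] at h
    refine h.congr fun t => ?_
    rw [← _root_.mul_inv_rev, ← sq]
  -- limits of the product entries
  have hAlim : ∀ p q : Fin m ⊕ Fin n,
      Tendsto (fun t : ℝ => (Q1 x * g x (t : ℂ)) p q - (g x (t : ℂ) * Q0 x) p q) atTop
        (𝓝 ((Q1 x * gI) p q - (gI * Q0 x) p q)) := by
    intro p q
    refine Tendsto.sub ?_ ?_
    · simp only [Matrix.mul_apply]
      exact tendsto_finset_sum _ fun a _ => (hglim a q).const_mul (Q1 x p a)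
    · simp only [Matrix.mul_apply]
      exact tendsto_finset_sum _ fun a _ => (hglim p a).mul_const (Q0 x a q)
  have hKElim : ∀ p q : Fin m ⊕ Fin n,
      Tendsto (fun t : ℝ => (J * g x (t : ℂ)) p q - (g x (t : ℂ) * J) p q) atTop
        (𝓝 ((J * gI) p q - (gI * J) p q)) := by
    intro p q
    refine Tendsto.sub ?_ ?_
    · simp only [Matrix.mul_apply]
      exact tendsto_finset_sum _ fun a _ => (hglim a q).const_mul (J p a)
    · simp only [Matrix.mul_apply]
      exact tendsto_finset_sum _ fun a _ => (hglim p a).mul_const (J a q)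
  -- PART (a)
  have ha : J * gI - gI * J = 0 := by
    ext p q
    rw [Matrix.zero_apply]
    have L := (((hDlim p q).const_mul Complex.I).mul hinv2).add
        ((hAlim p q).mul tendsto_ofReal_inv) |>.sub (hKElim p q)
    simp only [mul_zero, add_zero, zero_add, zero_sub] at L
    have L' : Tendsto (fun t : ℝ =>
        Complex.I * matDerivX g x (t : ℂ) p q * (((t : ℂ)) ^ 2)⁻¹
          + ((Q1 x * g x (t : ℂ)) p q - (g x (t : ℂ) * Q0 x) p q) * ((t : ℂ))⁻¹
          - ((J * g x (t : ℂ)) p q - (g x (t : ℂ) * J) p q)) atTop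
        (𝓝 (-((J * gI) p q - (gI * J) p q))) := L
    have hzero : Tendsto (fun t : ℝ =>
        Complex.I * matDerivX g x (t : ℂ) p q * (((t : ℂ)) ^ 2)⁻¹
          + ((Q1 x * g x (t : ℂ)) p q - (g x (t : ℂ) * Q0 x) p q) * ((t : ℂ))⁻¹
          - ((J * g x (t : ℂ)) p q - (g x (t : ℂ) * J) p q)) atTop (𝓝 0) := by
      refine Tendsto.congr' ?_ tendsto_const_nhds
      filter_upwards [hev0 p q, eventually_ge_atTop 1] with t h0 h1
      have ht0 : (t : ℂ) ≠ 0 := Complex.ofReal_ne_zero.2 (by linarith)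
      have hexp : Complex.I * matDerivX g x (t : ℂ) p q * (((t : ℂ)) ^ 2)⁻¹
          + ((Q1 x * g x (t : ℂ)) p q - (g x (t : ℂ) * Q0 x) p q) * ((t : ℂ))⁻¹
          - ((J * g x (t : ℂ)) p q - (g x (t : ℂ) * J) p q)
        = (((t : ℂ)) ^ 2)⁻¹ * (Complex.I * matDerivX g x (t : ℂ) p q
            + (t : ℂ) * ((Q1 x * g x (t : ℂ)) p q) - (t : ℂ) * ((g x (t : ℂ) * Q0 x) p q)
            - (t : ℂ) ^ 2 * ((J * g x (t : ℂ)) p q - (g x (t : ℂ) * J) p q)) := by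
        field_simp
        ring
      rw [hexp, h0, mul_zero]
    have huniq := tendsto_nhds_unique L' hzero
    rw [Matrix.sub_apply]
    linear_combination -huniq
  refine ⟨ha, ?_⟩
  -- PART (b)
  ext p q
  have h0pq : (∑ a, J p a * gI a q) - (∑ a, gI p a * J a q) = 0 := by
    have h := congrFun (congrFun ha p) q
    simpa [Matrix.sub_apply, Matrix.mul_apply] using h
  have htK : Tendsto (fun t : ℝ => (t : ℂ) * ((J * g x (t : ℂ)) p q - (g x (t : ℂ) * J) p q))
      atTop (𝓝 ((J * Tm) p q - (Tm * J) p q)) := by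
    have h1 : Tendsto (fun t : ℝ =>
        (∑ a, J p a * ((t : ℂ) * (g x (t : ℂ) a q - gI a q)))
          - ∑ a, ((t : ℂ) * (g x (t : ℂ) p a - gI p a)) * J a q) atTop
        (𝓝 ((J * Tm) p q - (Tm * J) p q)) := by
      refine Tendsto.sub ?_ ?_
      · simp only [Matrix.mul_apply]
        exact tendsto_finset_sum _ fun a _ => (hdglim a q).const_mul (J p a)
      · simp only [Matrix.mul_apply]
        exact tendsto_finset_sum _ fun a _ => (hdglim p a).mul_const (J a q)
    refine h1.congr fun t => ?_
    have e1 : (∑ a, J p a * ((t : ℂ) * (g x (t : ℂ) a q - gI a q)))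
        = (t : ℂ) * (∑ a, J p a * g x (t : ℂ) a q) - (t : ℂ) * ∑ a, J p a * gI a q := by
      rw [Finset.mul_sum, Finset.mul_sum, ← Finset.sum_sub_distrib]
      exact Finset.sum_congr rfl fun a _ => by ring
    have e2 : (∑ a, ((t : ℂ) * (g x (t : ℂ) p a - gI p a)) * J a q)
        = (t : ℂ) * (∑ a, g x (t : ℂ) p a * J a q) - (t : ℂ) * ∑ a, gI p a * J a q := by
      rw [Finset.mul_sum, Finset.mul_sum, ← Finset.sum_sub_distrib]
      exact Finset.sum_congr rfl fun a _ => by ring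
    rw [e1, e2]
    simp only [Matrix.mul_apply]
    linear_combination (-(t : ℂ)) * h0pq
  have L := ((((hDlim p q).const_mul Complex.I).mul tendsto_ofReal_inv).add (hAlim p q)).sub htK
  simp only [mul_zero, zero_add] at L
  have L' : Tendsto (fun t : ℝ =>
      Complex.I * matDerivX g x (t : ℂ) p q * ((t : ℂ))⁻¹
        + ((Q1 x * g x (t : ℂ)) p q - (g x (t : ℂ) * Q0 x) p q)
        - (t : ℂ) * ((J * g x (t : ℂ)) p q - (g x (t : ℂ) * J) p q)) atTop
      (𝓝 (((Q1 x * gI) p q - (gI * Q0 x) p q) - ((J * Tm) p q - (Tm * J) p q))) := L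
  have hzero : Tendsto (fun t : ℝ =>
      Complex.I * matDerivX g x (t : ℂ) p q * ((t : ℂ))⁻¹
        + ((Q1 x * g x (t : ℂ)) p q - (g x (t : ℂ) * Q0 x) p q)
        - (t : ℂ) * ((J * g x (t : ℂ)) p q - (g x (t : ℂ) * J) p q)) atTop (𝓝 0) := by
    refine Tendsto.congr' ?_ tendsto_const_nhds
    filter_upwards [hev0 p q, eventually_ge_atTop 1] with t h0 h1
    have ht0 : (t : ℂ) ≠ 0 := Complex.ofReal_ne_zero.2 (by linarith)
    have hexp : Complex.I * matDerivX g x (t : ℂ) p q * ((t : ℂ))⁻¹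
        + ((Q1 x * g x (t : ℂ)) p q - (g x (t : ℂ) * Q0 x) p q)
        - (t : ℂ) * ((J * g x (t : ℂ)) p q - (g x (t : ℂ) * J) p q)
      = ((t : ℂ))⁻¹ * (Complex.I * matDerivX g x (t : ℂ) p q
          + (t : ℂ) * ((Q1 x * g x (t : ℂ)) p q) - (t : ℂ) * ((g x (t : ℂ) * Q0 x) p q)
          - (t : ℂ) ^ 2 * ((J * g x (t : ℂ)) p q - (g x (t : ℂ) * J) p q)) := by
      field_simp
      ring
    rw [hexp, h0, mul_zero]
  have huniq := tendsto_nhds_unique L' hzero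
  simp only [Matrix.sub_apply]
  linear_combination huniq
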